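/- Let S = ⟨n_1,n_2,n_3⟩ be a numerical semigroup minimally generated by n_1 < n_2 < n_3 with gcd(n_1,n_2,n_3)=1 which is not symmetric, with c_i and r_{i,j} as in the standard setup, and let T(S) = {g_1, g_2} with g_1 = g(S). (i) If g_1 = (c_2−1)n_2 + (r_{1,3}−1)n_3 − n_1, then g_1 − g_2 = r_{1,3}r_{2,1}r_{3,2} − r_{1,2}r_{2,3}r_{3,1}. (ii) If g_1 = (c_3−1)n_3 + (r_{1,2}−1)n_2 − n_1, then g_1 − g_2 = r_{1,2}r_{2,3}r_{3,1} − r_{1,3}r_{2,1}r_{3,2}. -/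

import Mathlib

/-- Membership of an integer in an additive submonoid of `ℕ`, viewed inside `ℤ`
via the inclusion `ℕ ⊆ ℤ`. -/
def AddSubmonoid.zmem (S : AddSubmonoid ℕ) (x : ℤ) : Prop :=
  ∃ n : ℕ, n ∈ S ∧ (n : ℤ) = x

/-- The Frobenius number `g(S) = max {x ∈ ℤ : x ∉ S}` of a numerical semigroup. -/
noncomputable def frobeniusNumber (S : AddSubmonoid ℕ) : ℤ :=
  sSup {x : ℤ | ¬ S.zmem x}

/-- The set of pseudo-Frobenius numbers
`T(S) = {x ∈ ℤ \ S : x + s ∈ S for all s ∈ S, s ≠ 0}`. -/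
def pseudoFrobeniusSet (S : AddSubmonoid ℕ) : Set ℤ :=
  {x : ℤ | ¬ S.zmem x ∧ ∀ s ∈ S, s ≠ 0 → S.zmem (x + s)}

lemma ns11_pair {a b x : ℕ} :
    x ∈ AddSubmonoid.closure {a, b} ↔ ∃ p q : ℕ, x = p * a + q * b := by
  rw [AddSubmonoid.mem_closure_pair]
  constructor
  · rintro ⟨m, n, h⟩; exact ⟨m, n, by simpa [smul_eq_mul] using h.symm⟩
  · rintro ⟨p, q, h⟩; exact ⟨p, q, by simp [smul_eq_mul, h.symm]⟩

lemma ns11_triple {a b c x : ℕ} :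
    x ∈ AddSubmonoid.closure {a, b, c} ↔ ∃ p q r : ℕ, x = p * a + q * b + r * c := by
  constructor
  · intro hx
    induction hx using AddSubmonoid.closure_induction with
    | mem y hy =>
      rcases hy with h | h | h
      · exact ⟨1, 0, 0, by simp [h]⟩
      · exact ⟨0, 1, 0, by simp [h]⟩
      · exact ⟨0, 0, 1, by simp [Set.mem_singleton_iff.mp h]⟩
    | zero => exact ⟨0, 0, 0, by simp⟩
    | add x y _ _ hx hy =>
      obtain ⟨p, q, r, rfl⟩ := hx
      obtain ⟨p', q', r', rfl⟩ := hy
      exact ⟨p + p', q + q', r + r', by ring⟩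
  · rintro ⟨p, q, r, rfl⟩
    have ha : a ∈ AddSubmonoid.closure ({a, b, c} : Set ℕ) :=
      AddSubmonoid.subset_closure (by simp)
    have hb : b ∈ AddSubmonoid.closure ({a, b, c} : Set ℕ) :=
      AddSubmonoid.subset_closure (by simp)
    have hc : c ∈ AddSubmonoid.closure ({a, b, c} : Set ℕ) :=
      AddSubmonoid.subset_closure (by simp)
    simpa [smul_eq_mul] using
      add_mem (add_mem (nsmul_mem ha p) (nsmul_mem hb q))
        (nsmul_mem hc r)

lemma ns11_keyLT (x y z : ℕ) (hz : 0 < z) (cx cy a b d f : ℕ) (hd : 0 < d) (hb : 0 < b)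
    (hmin : ∀ m : ℕ, 0 < m → (∃ p q : ℕ, m * x = p * y + q * z) → cx ≤ m)
    (e1 : cx * x = a * y + b * z) (e2 : cy * y = d * x + f * z) : a < cy := by
  by_contra hcon
  push_neg at hcon
  have E1 : (cx : ℤ) * x = a * y + b * z := by exact_mod_cast e1
  have E2 : (cy : ℤ) * y = d * x + f * z := by exact_mod_cast e2
  rcases lt_or_ge d cx with h | h
  · have key : (cx - d) * x = (a - cy) * y + (b + f) * z := by
      have : ((cx - d : ℕ) : ℤ) * x = ((a - cy : ℕ) : ℤ) * y + ((b + f : ℕ) : ℤ) * z := by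
        push_cast [Nat.cast_sub h.le, Nat.cast_sub hcon]
        linear_combination E1 + E2
      exact_mod_cast this
    have := hmin (cx - d) (by omega) ⟨a - cy, b + f, key⟩
    omega
  · have h1 : (d : ℤ) * x ≥ cx * x := by
      have := Nat.mul_le_mul_right x h; exact_mod_cast this
    have h2 : (a : ℤ) * y ≥ cy * y := by
      have := Nat.mul_le_mul_right y hcon; exact_mod_cast this
    have hbz : (0:ℤ) < (b : ℤ) * z := by positivity
    have hfz : (0:ℤ) ≤ (f : ℤ) * z := by positivity
    linarith

/-- All the numerical data of a 3-generated numerical semigroup in "standard setup". -/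
structure NS where
  n₁ : ℕ
  n₂ : ℕ
  n₃ : ℕ
  c₁ : ℕ
  c₂ : ℕ
  c₃ : ℕ
  r₁₂ : ℕ
  r₁₃ : ℕ
  r₂₁ : ℕ
  r₂₃ : ℕ
  r₃₁ : ℕ
  r₃₂ : ℕ
  hn₁ : 0 < n₁
  hn₂ : 0 < n₂
  hn₃ : 0 < n₃
  h12 : 0 < r₁₂
  h13 : 0 < r₁₃
  h21 : 0 < r₂₁
  h23 : 0 < r₂₃
  h31 : 0 < r₃₁
  h32 : 0 < r₃₂
  E1 : c₁ * n₁ = r₁₂ * n₂ + r₁₃ * n₃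
  E2 : c₂ * n₂ = r₂₁ * n₁ + r₂₃ * n₃
  E3 : c₃ * n₃ = r₃₁ * n₁ + r₃₂ * n₂
  M1 : ∀ m : ℕ, 0 < m → (∃ p q : ℕ, m * n₁ = p * n₂ + q * n₃) → c₁ ≤ m
  M2 : ∀ m : ℕ, 0 < m → (∃ p q : ℕ, m * n₂ = p * n₁ + q * n₃) → c₂ ≤ m
  M3 : ∀ m : ℕ, 0 < m → (∃ p q : ℕ, m * n₃ = p * n₁ + q * n₂) → c₃ ≤ m

namespace NS

variable (C : NS)

lemma hc₁ : 0 < C.c₁ := by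
  have e := C.E1
  have h2 : 0 < C.r₁₂ * C.n₂ := Nat.mul_pos C.h12 C.hn₂
  rcases Nat.eq_zero_or_pos C.c₁ with h | h
  · rw [h] at e; simp at e; omega
  · exact h

lemma lt32 : C.r₃₂ < C.c₂ :=
  ns11_keyLT C.n₃ C.n₂ C.n₁ C.hn₁ C.c₃ C.c₂ C.r₃₂ C.r₃₁ C.r₂₃ C.r₂₁ C.h23 C.h31
    (fun m hm h => C.M3 m hm (by obtain ⟨p, q, hh⟩ := h; exact ⟨q, p, by omega⟩))
    (by rw [C.E3, Nat.add_comm]) (by rw [C.E2, Nat.add_comm])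

lemma lt23 : C.r₂₃ < C.c₃ :=
  ns11_keyLT C.n₂ C.n₃ C.n₁ C.hn₁ C.c₂ C.c₃ C.r₂₃ C.r₂₁ C.r₃₂ C.r₃₁ C.h32 C.h21
    (fun m hm h => C.M2 m hm (by obtain ⟨p, q, hh⟩ := h; exact ⟨q, p, by omega⟩))
    (by rw [C.E2, Nat.add_comm]) (by rw [C.E3, Nat.add_comm])

lemma lt12 : C.r₁₂ < C.c₂ :=
  ns11_keyLT C.n₁ C.n₂ C.n₃ C.hn₃ C.c₁ C.c₂ C.r₁₂ C.r₁₃ C.r₂₁ C.r₂₃ C.h21 C.h13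
    C.M1 C.E1 C.E2

lemma lt21 : C.r₂₁ < C.c₁ :=
  ns11_keyLT C.n₂ C.n₁ C.n₃ C.hn₃ C.c₂ C.c₁ C.r₂₁ C.r₂₃ C.r₁₂ C.r₁₃ C.h12 C.h23
    C.M2 C.E2 C.E1

lemma lt13 : C.r₁₃ < C.c₃ :=
  ns11_keyLT C.n₁ C.n₃ C.n₂ C.hn₂ C.c₁ C.c₃ C.r₁₃ C.r₁₂ C.r₃₁ C.r₃₂ C.h31 C.h12
    (fun m hm h => C.M1 m hm (by obtain ⟨p, q, hh⟩ := h; exact ⟨q, p, by omega⟩))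
    (by rw [C.E1, Nat.add_comm]) C.E3

lemma lt31 : C.r₃₁ < C.c₁ :=
  ns11_keyLT C.n₃ C.n₁ C.n₂ C.hn₂ C.c₃ C.c₁ C.r₃₁ C.r₃₂ C.r₁₃ C.r₁₂ C.h13 C.h32
    C.M3 C.E3 (by rw [C.E1, Nat.add_comm])

lemma ZE1 : (C.c₁ : ℤ) * C.n₁ = C.r₁₂ * C.n₂ + C.r₁₃ * C.n₃ := by exact_mod_cast C.E1
lemma ZE2 : (C.c₂ : ℤ) * C.n₂ = C.r₂₁ * C.n₁ + C.r₂₃ * C.n₃ := by exact_mod_cast C.E2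
lemma ZE3 : (C.c₃ : ℤ) * C.n₃ = C.r₃₁ * C.n₁ + C.r₃₂ * C.n₂ := by exact_mod_cast C.E3

lemma cid :
    C.c₁ = C.r₂₁ + C.r₃₁ ∧ C.c₂ = C.r₁₂ + C.r₃₂ ∧ C.c₃ = C.r₁₃ + C.r₂₃ := by
  have le1 : C.c₁ ≤ C.r₂₁ + C.r₃₁ := by
    refine C.M1 _ (by have := C.h21; omega) ⟨C.c₂ - C.r₃₂, C.c₃ - C.r₂₃, ?_⟩
    have : ((C.r₂₁ + C.r₃₁ : ℕ) : ℤ) * C.n₁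
        = ((C.c₂ - C.r₃₂ : ℕ) : ℤ) * C.n₂ + ((C.c₃ - C.r₂₃ : ℕ) : ℤ) * C.n₃ := by
      push_cast [Nat.cast_sub C.lt32.le, Nat.cast_sub C.lt23.le]
      linear_combination -C.ZE2 - C.ZE3
    exact_mod_cast this
  have le2 : C.c₂ ≤ C.r₁₂ + C.r₃₂ := by
    refine C.M2 _ (by have := C.h12; omega) ⟨C.c₁ - C.r₃₁, C.c₃ - C.r₁₃, ?_⟩
    have : ((C.r₁₂ + C.r₃₂ : ℕ) : ℤ) * C.n₂
        = ((C.c₁ - C.r₃₁ : ℕ) : ℤ) * C.n₁ + ((C.c₃ - C.r₁₃ : ℕ) : ℤ) * C.n₃ := by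
      push_cast [Nat.cast_sub C.lt31.le, Nat.cast_sub C.lt13.le]
      linear_combination -C.ZE1 - C.ZE3
    exact_mod_cast this
  have le3 : C.c₃ ≤ C.r₁₃ + C.r₂₃ := by
    refine C.M3 _ (by have := C.h13; omega) ⟨C.c₁ - C.r₂₁, C.c₂ - C.r₁₂, ?_⟩
    have : ((C.r₁₃ + C.r₂₃ : ℕ) : ℤ) * C.n₃
        = ((C.c₁ - C.r₂₁ : ℕ) : ℤ) * C.n₁ + ((C.c₂ - C.r₁₂ : ℕ) : ℤ) * C.n₂ := by
      push_cast [Nat.cast_sub C.lt21.le, Nat.cast_sub C.lt12.le]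
      linear_combination -C.ZE1 - C.ZE2
    exact_mod_cast this
  -- now the sum identity forces equality
  have hz : ((C.r₂₁ + C.r₃₁ - C.c₁ : ℕ) : ℤ) * C.n₁
      + ((C.r₁₂ + C.r₃₂ - C.c₂ : ℕ) : ℤ) * C.n₂
      + ((C.r₁₃ + C.r₂₃ - C.c₃ : ℕ) : ℤ) * C.n₃ = 0 := by
    push_cast [Nat.cast_sub le1, Nat.cast_sub le2, Nat.cast_sub le3]
    linear_combination -C.ZE1 - C.ZE2 - C.ZE3
  have hz' : (C.r₂₁ + C.r₃₁ - C.c₁) * C.n₁ + (C.r₁₂ + C.r₃₂ - C.c₂) * C.n₂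
      + (C.r₁₃ + C.r₂₃ - C.c₃) * C.n₃ = 0 := by exact_mod_cast hz
  simp only [Nat.add_eq_zero, Nat.mul_eq_zero] at hz'
  have := C.hn₁; have := C.hn₂; have := C.hn₃
  omega


lemma cid1 : C.c₁ = C.r₂₁ + C.r₃₁ := C.cid.1
lemma cid2 : C.c₂ = C.r₁₂ + C.r₃₂ := C.cid.2.1
lemma cid3 : C.c₃ = C.r₁₃ + C.r₂₃ := C.cid.2.2

/-- No lattice point with positive value in the box `x < r₁₂`, `y < c₃`. -/
lemma noSmall_a (m x y : ℕ) (hm : 0 < m) (hx : x < C.r₁₂) (hy : y < C.c₃)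
    (heq : x * C.n₂ + y * C.n₃ = m * C.n₁) : False := by
  have hm1 : C.c₁ ≤ m := C.M1 m hm ⟨x, y, heq.symm⟩
  have Zeq : (x : ℤ) * C.n₂ + y * C.n₃ = m * C.n₁ := by exact_mod_cast heq
  rcases lt_or_ge y C.r₁₃ with h | h
  · have hn2 : (0:ℤ) < C.n₂ := by exact_mod_cast C.hn₂
    have hn3 : (0:ℤ) < C.n₃ := by exact_mod_cast C.hn₃
    have hn1 : (0:ℤ) < C.n₁ := by exact_mod_cast C.hn₁
    have q1 : (0:ℤ) ≤ ((C.r₁₂ : ℤ) - 1 - x) * C.n₂ := mul_nonneg (by omega) (by positivity)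
    have q2 : (0:ℤ) ≤ ((C.r₁₃ : ℤ) - 1 - y) * C.n₃ := mul_nonneg (by omega) (by positivity)
    have q3 : (0:ℤ) ≤ ((m : ℤ) - C.c₁) * C.n₁ := mul_nonneg (by omega) (by positivity)
    have := C.ZE1
    nlinarith [Zeq]
  · -- (y - r₁₃)*n₃ = (m - c₁)*n₁ + (r₁₂ - x)*n₂ > 0
    have key : (y - C.r₁₃) * C.n₃ = (m - C.c₁) * C.n₁ + (C.r₁₂ - x) * C.n₂ := by
      have : ((y - C.r₁₃ : ℕ) : ℤ) * C.n₃
          = ((m - C.c₁ : ℕ) : ℤ) * C.n₁ + ((C.r₁₂ - x : ℕ) : ℤ) * C.n₂ := by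
        push_cast [Nat.cast_sub h, Nat.cast_sub hm1, Nat.cast_sub hx.le]
        linear_combination Zeq + C.ZE1
      exact_mod_cast this
    have hpos : 0 < (y - C.r₁₃) * C.n₃ := by
      have : 0 < (C.r₁₂ - x) * C.n₂ := Nat.mul_pos (by omega) C.hn₂
      omega
    have hy3 : 0 < y - C.r₁₃ := by
      rcases Nat.eq_zero_or_pos (y - C.r₁₃) with h' | h'
      · rw [h'] at hpos; simp at hpos
      · exact h'
    have := C.M3 (y - C.r₁₃) hy3 ⟨m - C.c₁, C.r₁₂ - x, key⟩
    omega

/-- No lattice point with positive value in the box `x < c₂`, `y < r₁₃`. -/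
lemma noSmall_b (m x y : ℕ) (hm : 0 < m) (hx : x < C.c₂) (hy : y < C.r₁₃)
    (heq : x * C.n₂ + y * C.n₃ = m * C.n₁) : False := by
  have hm1 : C.c₁ ≤ m := C.M1 m hm ⟨x, y, heq.symm⟩
  have Zeq : (x : ℤ) * C.n₂ + y * C.n₃ = m * C.n₁ := by exact_mod_cast heq
  rcases lt_or_ge x C.r₁₂ with h | h
  · exact C.noSmall_a m x y hm h (by have := C.lt13; omega) heq
  · have key : (x - C.r₁₂) * C.n₂ = (m - C.c₁) * C.n₁ + (C.r₁₃ - y) * C.n₃ := by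
      have : ((x - C.r₁₂ : ℕ) : ℤ) * C.n₂
          = ((m - C.c₁ : ℕ) : ℤ) * C.n₁ + ((C.r₁₃ - y : ℕ) : ℤ) * C.n₃ := by
        push_cast [Nat.cast_sub h, Nat.cast_sub hm1, Nat.cast_sub hy.le]
        linear_combination Zeq + C.ZE1
      exact_mod_cast this
    have hpos : 0 < (x - C.r₁₂) * C.n₂ := by
      have : 0 < (C.r₁₃ - y) * C.n₃ := Nat.mul_pos (by omega) C.hn₃
      omega
    have hx2 : 0 < x - C.r₁₂ := by
      rcases Nat.eq_zero_or_pos (x - C.r₁₂) with h' | h'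
      · rw [h'] at hpos; simp at hpos
      · exact h'
    have := C.M2 (x - C.r₁₂) hx2 ⟨m - C.c₁, C.r₁₃ - y, key⟩
    omega

/-- Every lattice point `(x, y)` with `0 ≤ y < c₃` is an integer combination of
`(c₂, -r₂₃)` and `(-r₃₂, c₃)`. -/
lemma span (m : ℕ) : ∀ x y : ℕ, y < C.c₃ → x * C.n₂ + y * C.n₃ = m * C.n₁ →
    ∃ a b : ℤ, (x : ℤ) = a * C.c₂ - b * C.r₃₂ ∧ (y : ℤ) = -a * C.r₂₃ + b * C.c₃ := by
  induction m using Nat.strong_induction_on with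
  | _ m ih =>
  intro x y hy heq
  rcases Nat.eq_zero_or_pos m with rfl | hm
  · simp only [Nat.zero_mul] at heq
    have hx0 : x = 0 := by
      rcases Nat.add_eq_zero.mp heq with ⟨h1, _⟩
      rcases Nat.mul_eq_zero.mp h1 with h | h
      · exact h
      · exact absurd h (by have := C.hn₂; omega)
    have hy0 : y = 0 := by
      rcases Nat.add_eq_zero.mp heq with ⟨_, h2⟩
      rcases Nat.mul_eq_zero.mp h2 with h | h
      · exact h
      · exact absurd h (by have := C.hn₃; omega)
    exact ⟨0, 0, by simp [hx0], by simp [hy0]⟩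
  have hm1 : C.c₁ ≤ m := C.M1 m hm ⟨x, y, heq.symm⟩
  have Zeq : (x : ℤ) * C.n₂ + y * C.n₃ = m * C.n₁ := by exact_mod_cast heq
  rcases lt_or_ge x C.r₁₂ with hxlt | hxge
  · exact absurd (C.noSmall_a m x y hm hxlt hy heq) (by simp)
  rcases lt_or_ge y C.r₁₃ with hylt | hyge
  · -- x ≥ c₂ + r₁₂ ; subtract (c₂, -r₂₃)
    have key : (x - C.r₁₂) * C.n₂ = (m - C.c₁) * C.n₁ + (C.r₁₃ - y) * C.n₃ := by
      have : ((x - C.r₁₂ : ℕ) : ℤ) * C.n₂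
          = ((m - C.c₁ : ℕ) : ℤ) * C.n₁ + ((C.r₁₃ - y : ℕ) : ℤ) * C.n₃ := by
        push_cast [Nat.cast_sub hxge, Nat.cast_sub hm1, Nat.cast_sub hylt.le]
        linear_combination Zeq + C.ZE1
      exact_mod_cast this
    have hpos : 0 < (x - C.r₁₂) * C.n₂ := by
      have : 0 < (C.r₁₃ - y) * C.n₃ := Nat.mul_pos (by omega) C.hn₃
      omega
    have hx2 : 0 < x - C.r₁₂ := by
      rcases Nat.eq_zero_or_pos (x - C.r₁₂) with h' | h'
      · rw [h'] at hpos; simp at hpos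
      · exact h'
    have hc2x : C.c₂ ≤ x - C.r₁₂ := C.M2 (x - C.r₁₂) hx2 ⟨m - C.c₁, C.r₁₃ - y, key⟩
    have hxc : C.c₂ ≤ x := by omega
    have Z2 : ((x : ℤ) - C.c₂) * C.n₂ + ((y : ℤ) + C.r₂₃) * C.n₃
        = ((m : ℤ) - C.r₂₁) * C.n₁ := by linear_combination Zeq - C.ZE2
    have hn1 : (0:ℤ) < C.n₁ := by exact_mod_cast C.hn₁
    have hmr : C.r₂₁ ≤ m := by
      by_contra hcon
      push_neg at hcon
      have t1 : (0:ℤ) ≤ ((x : ℤ) - C.c₂) * C.n₂ := mul_nonneg (by omega) (by positivity)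
      have t2 : (0:ℤ) ≤ ((y : ℤ) + C.r₂₃) * C.n₃ := mul_nonneg (by omega) (by positivity)
      have t3 : ((m : ℤ) - C.r₂₁) * C.n₁ < 0 := mul_neg_of_neg_of_pos (by omega) hn1
      linarith
    have heq2 : (x - C.c₂) * C.n₂ + (y + C.r₂₃) * C.n₃ = (m - C.r₂₁) * C.n₁ := by
      have : ((x - C.c₂ : ℕ) : ℤ) * C.n₂ + ((y + C.r₂₃ : ℕ) : ℤ) * C.n₃
          = ((m - C.r₂₁ : ℕ) : ℤ) * C.n₁ := by
        push_cast [Nat.cast_sub hxc, Nat.cast_sub hmr]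
        linear_combination Zeq - C.ZE2
      exact_mod_cast this
    have hlt2 : m - C.r₂₁ < m := by have := C.h21; omega
    have hcid3 := C.cid3
    obtain ⟨a, b, ha, hb⟩ := ih (m - C.r₂₁) hlt2 (x - C.c₂) (y + C.r₂₃) (by omega) heq2
    refine ⟨a + 1, b, ?_, ?_⟩
    · have hxx : ((x - C.c₂ : ℕ) : ℤ) = (x : ℤ) - C.c₂ := by
        push_cast [Nat.cast_sub hxc]; ring
      rw [hxx] at ha
      linarith [ha]
    · have hyy : ((y + C.r₂₃ : ℕ) : ℤ) = (y : ℤ) + C.r₂₃ := by push_cast; ring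
      rw [hyy] at hb
      linarith [hb]
  · -- subtract (r₁₂, r₁₃)
    have heq' : (x - C.r₁₂) * C.n₂ + (y - C.r₁₃) * C.n₃ = (m - C.c₁) * C.n₁ := by
      have : ((x - C.r₁₂ : ℕ) : ℤ) * C.n₂ + ((y - C.r₁₃ : ℕ) : ℤ) * C.n₃
          = ((m - C.c₁ : ℕ) : ℤ) * C.n₁ := by
        push_cast [Nat.cast_sub hxge, Nat.cast_sub hyge, Nat.cast_sub hm1]
        linear_combination Zeq + C.ZE1
      exact_mod_cast this
    have hlt : m - C.c₁ < m := by have := C.hc₁; omega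
    obtain ⟨a, b, ha, hb⟩ := ih (m - C.c₁) hlt (x - C.r₁₂) (y - C.r₁₃) (by omega) heq'
    refine ⟨a + 1, b + 1, ?_, ?_⟩
    · have hxx : ((x - C.r₁₂ : ℕ) : ℤ) = (x : ℤ) - C.r₁₂ := by
        push_cast [Nat.cast_sub hxge]; ring
      have hc2 : (C.c₂ : ℤ) = C.r₁₂ + C.r₃₂ := by exact_mod_cast C.cid2
      rw [hxx] at ha
      linarith [ha]
    · have hyy : ((y - C.r₁₃ : ℕ) : ℤ) = (y : ℤ) - C.r₁₃ := by
        push_cast [Nat.cast_sub hyge]; ring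
      have hc3 : (C.c₃ : ℤ) = C.r₁₃ + C.r₂₃ := by exact_mod_cast C.cid3
      rw [hyy] at hb
      linarith [hb]


set_option maxHeartbeats 1000000 in
/-- Integer version: every lattice point is an integer combination of the two rows. -/
lemma span' (X Y : ℤ) (hdvd : (C.n₁ : ℤ) ∣ X * C.n₂ + Y * C.n₃) :
    ∃ a b : ℤ, X = a * C.c₂ - b * C.r₃₂ ∧ Y = -a * C.r₂₃ + b * C.c₃ := by
  obtain ⟨mz, hmz⟩ := hdvd
  have h12 : (1:ℤ) ≤ C.r₁₂ := by exact_mod_cast C.h12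
  have h13 : (1:ℤ) ≤ C.r₁₃ := by exact_mod_cast C.h13
  have h32 : (0:ℤ) ≤ C.r₃₂ := by positivity
  have hn1 : (0:ℤ) < C.n₁ := by exact_mod_cast C.hn₁
  have hn2 : (0:ℤ) < C.n₂ := by exact_mod_cast C.hn₂
  have hn3 : (0:ℤ) < C.n₃ := by exact_mod_cast C.hn₃
  have hc3N : 0 < C.c₃ := by have := C.lt13; omega
  have hc3 : (0:ℤ) < C.c₃ := by exact_mod_cast hc3N
  set k : ℤ := (X.natAbs : ℤ) + (Y.natAbs : ℤ) with hk
  have hk0 : 0 ≤ k := by positivity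
  have hkX : -X ≤ k := by simp only [hk]; omega
  have hkY : -Y ≤ k := by simp only [hk]; omega
  have hkr12 : k ≤ k * C.r₁₂ := le_mul_of_one_le_right hk0 h12
  have hkr13 : k ≤ k * C.r₁₃ := le_mul_of_one_le_right hk0 h13
  have hX0 : 0 ≤ X + k * C.r₁₂ := by omega
  have hY0 : 0 ≤ Y + k * C.r₁₃ := by omega
  set t : ℤ := (Y + k * C.r₁₃) / C.c₃ with ht
  have ht0 : 0 ≤ t := Int.ediv_nonneg hY0 hc3.le
  set y₁ : ℤ := Y + k * C.r₁₃ - C.c₃ * t with hy₁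
  have hy₁mod : y₁ = (Y + k * C.r₁₃) % C.c₃ := by rw [Int.emod_def]
  have hy₁0 : 0 ≤ y₁ := hy₁mod ▸ Int.emod_nonneg _ (ne_of_gt hc3)
  have hy₁lt : y₁ < C.c₃ := hy₁mod ▸ Int.emod_lt_of_pos _ hc3
  set x₁ : ℤ := X + k * C.r₁₂ + t * C.r₃₂ with hx₁
  have hx₁0 : 0 ≤ x₁ := by
    have : 0 ≤ t * C.r₃₂ := mul_nonneg ht0 h32
    omega
  set m₁ : ℤ := mz + k * C.c₁ - t * C.r₃₁ with hm₁
  have heqZ : x₁ * C.n₂ + y₁ * C.n₃ = m₁ * C.n₁ := by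
    simp only [hx₁, hy₁, hm₁]
    linear_combination hmz - k * C.ZE1 - t * C.ZE3
  have hm₁0 : 0 ≤ m₁ := by
    by_contra hcon
    push_neg at hcon
    have t1 : 0 ≤ x₁ * C.n₂ := mul_nonneg hx₁0 hn2.le
    have t2 : 0 ≤ y₁ * C.n₃ := mul_nonneg hy₁0 hn3.le
    have t3 : m₁ * C.n₁ < 0 := mul_neg_of_neg_of_pos hcon hn1
    linarith
  obtain ⟨xn, hxn⟩ := Int.eq_ofNat_of_zero_le hx₁0
  obtain ⟨yn, hyn⟩ := Int.eq_ofNat_of_zero_le hy₁0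
  obtain ⟨mn, hmn⟩ := Int.eq_ofNat_of_zero_le hm₁0
  have heqN : xn * C.n₂ + yn * C.n₃ = mn * C.n₁ := by
    have : (xn : ℤ) * C.n₂ + (yn : ℤ) * C.n₃ = (mn : ℤ) * C.n₁ := by
      rw [← hxn, ← hyn, ← hmn]; exact heqZ
    exact_mod_cast this
  have hynlt : yn < C.c₃ := by
    have : (yn : ℤ) < C.c₃ := by rw [← hyn]; exact hy₁lt
    exact_mod_cast this
  obtain ⟨a, b, ha, hb⟩ := C.span mn xn yn hynlt heqN
  rw [← hxn] at ha
  rw [← hyn] at hb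
  have hcid2 : (C.c₂ : ℤ) = C.r₁₂ + C.r₃₂ := by exact_mod_cast C.cid2
  have hcid3 : (C.c₃ : ℤ) = C.r₁₃ + C.r₂₃ := by exact_mod_cast C.cid3
  refine ⟨a - k, b - k + t, ?_, ?_⟩
  · rw [hx₁] at ha
    linear_combination ha + k * hcid2
  · rw [hy₁] at hb
    linear_combination hb + k * hcid3

set_option maxHeartbeats 1000000 in
/-- The determinantal identities: `n₂` and `n₃` as 2×2 minors (and `n₁ = c₂c₃ - r₂₃r₃₂`). -/
lemma nident (hgcd : Nat.gcd C.n₁ (Nat.gcd C.n₂ C.n₃) = 1) :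
    ((C.n₂ : ℤ) = C.r₂₁ * C.c₃ + C.r₂₃ * C.r₃₁) ∧
      ((C.n₃ : ℤ) = C.c₂ * C.r₃₁ + C.r₂₁ * C.r₃₂) := by
  have hn1 : (0:ℤ) < C.n₁ := by exact_mod_cast C.hn₁
  have hn1' : (C.n₁ : ℤ) ≠ 0 := by omega
  set e : ℤ := C.c₂ * C.c₃ - C.r₂₃ * C.r₃₂ with he
  have he2 : e * C.n₂ = (C.r₂₁ * C.c₃ + C.r₂₃ * C.r₃₁) * C.n₁ := by
    simp only [he]
    linear_combination (C.c₃ : ℤ) * C.ZE2 + (C.r₂₃ : ℤ) * C.ZE3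
  have he3 : e * C.n₃ = (C.c₂ * C.r₃₁ + C.r₂₁ * C.r₃₂) * C.n₁ := by
    simp only [he]
    linear_combination (C.c₂ : ℤ) * C.ZE3 + (C.r₃₂ : ℤ) * C.ZE2
  -- n₁ ∣ e via Bezout
  have bez23 := Nat.gcd_eq_gcd_ab C.n₂ C.n₃
  have bez1 := Nat.gcd_eq_gcd_ab C.n₁ (Nat.gcd C.n₂ C.n₃)
  rw [hgcd] at bez1
  set u := Nat.gcdA C.n₁ (Nat.gcd C.n₂ C.n₃)
  set v := Nat.gcdB C.n₁ (Nat.gcd C.n₂ C.n₃)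
  set aa := Nat.gcdA C.n₂ C.n₃
  set bb := Nat.gcdB C.n₂ C.n₃
  have hone : (1:ℤ) = C.n₁ * u + (C.n₂ * aa + C.n₃ * bb) * v := by
    rw [← bez23]; exact_mod_cast bez1
  obtain ⟨μ, hμ⟩ : (C.n₁ : ℤ) ∣ e := by
    have hw2 : e * C.n₂ = C.n₁ * (C.r₂₁ * C.c₃ + C.r₂₃ * C.r₃₁) := by linear_combination he2
    have hw3 : e * C.n₃ = C.n₁ * (C.c₂ * C.r₃₁ + C.r₂₁ * C.r₃₂) := by linear_combination he3
    refine ⟨e * u + (C.r₂₁ * C.c₃ + C.r₂₃ * C.r₃₁) * aa * v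
      + (C.c₂ * C.r₃₁ + C.r₂₁ * C.r₃₂) * bb * v, ?_⟩
    linear_combination e * hone + (aa * v) * hw2 + (bb * v) * hw3
  have hepos : 0 < e := by
    have l1 : (C.r₃₂ : ℤ) + 1 ≤ C.c₂ := by exact_mod_cast C.lt32
    have l2 : (C.r₂₃ : ℤ) + 1 ≤ C.c₃ := by exact_mod_cast C.lt23
    have h32 : (0:ℤ) ≤ C.r₃₂ := by positivity
    have h23 : (0:ℤ) ≤ C.r₂₃ := by positivity
    have hmm : ((C.r₃₂ : ℤ) + 1) * ((C.r₂₃ : ℤ) + 1) ≤ C.c₂ * C.c₃ :=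
      mul_le_mul l1 l2 (by linarith) (by linarith)
    have hexp : ((C.r₃₂ : ℤ) + 1) * ((C.r₂₃ : ℤ) + 1)
        = C.r₃₂ * C.r₂₃ + C.r₃₂ + C.r₂₃ + 1 := by ring
    simp only [he]
    have : (C.r₂₃ : ℤ) * C.r₃₂ = C.r₃₂ * C.r₂₃ := by ring
    linarith
  have hμ1 : 1 ≤ μ := by
    by_contra hcon
    push_neg at hcon
    have hle : e ≤ 0 := by
      rw [hμ]
      exact mul_nonpos_of_nonneg_of_nonpos hn1.le (by omega)
    exact absurd hepos (not_lt.mpr hle)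
  -- μ divides c₃ and r₂₃ (via (n₁,0))
  obtain ⟨a1, b1, ha1, hb1⟩ := C.span' (C.n₁ : ℤ) 0 ⟨C.n₂, by ring⟩
  have hdc3 : (C.c₃ : ℤ) = a1 * μ := by
    have hc : (C.c₃ : ℤ) * C.n₁ = a1 * e := by
      simp only [he]; linear_combination (C.c₃ : ℤ) * ha1 + (C.r₃₂ : ℤ) * hb1
    rw [hμ] at hc
    exact mul_right_cancel₀ hn1' (by linear_combination hc)
  have hdr23 : (C.r₂₃ : ℤ) = b1 * μ := by
    have hc : (C.r₂₃ : ℤ) * C.n₁ = b1 * e := by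
      simp only [he]; linear_combination (C.r₂₃ : ℤ) * ha1 + (C.c₂ : ℤ) * hb1
    rw [hμ] at hc
    exact mul_right_cancel₀ hn1' (by linear_combination hc)
  -- μ divides r₃₂ and c₂ (via (0,n₁))
  obtain ⟨a2, b2, ha2, hb2⟩ := C.span' 0 (C.n₁ : ℤ) ⟨C.n₃, by ring⟩
  have hdr32 : (C.r₃₂ : ℤ) = a2 * μ := by
    have hc : (C.r₃₂ : ℤ) * C.n₁ = a2 * e := by
      simp only [he]; linear_combination (C.c₃ : ℤ) * ha2 + (C.r₃₂ : ℤ) * hb2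
    rw [hμ] at hc
    exact mul_right_cancel₀ hn1' (by linear_combination hc)
  have hdc2 : (C.c₂ : ℤ) = b2 * μ := by
    have hc : (C.c₂ : ℤ) * C.n₁ = b2 * e := by
      simp only [he]; linear_combination (C.r₂₃ : ℤ) * ha2 + (C.c₂ : ℤ) * hb2
    rw [hμ] at hc
    exact mul_right_cancel₀ hn1' (by linear_combination hc)
  -- μ divides r₃₁ and r₂₁ (via the kernel vector)
  set g := Nat.gcd C.n₂ C.n₃ with hg
  obtain ⟨u2, hu2⟩ : g ∣ C.n₂ := Nat.gcd_dvd_left _ _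
  obtain ⟨u3, hu3⟩ : g ∣ C.n₃ := Nat.gcd_dvd_right _ _
  have hZu2 : (C.n₂ : ℤ) = g * u2 := by exact_mod_cast hu2
  have hZu3 : (C.n₃ : ℤ) = g * u3 := by exact_mod_cast hu3
  obtain ⟨a3, b3, ha3, hb3⟩ := C.span' (u3 : ℤ) (-(u2 : ℤ))
    ⟨0, by rw [hZu2, hZu3]; ring⟩
  have key2 : (C.c₃ : ℤ) * C.n₃ - C.r₃₂ * C.n₂ = (g * a3) * e := by
    have key : (C.c₃ : ℤ) * u3 - C.r₃₂ * u2 = a3 * e := by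
      simp only [he]; linear_combination (C.c₃ : ℤ) * ha3 + (C.r₃₂ : ℤ) * hb3
    rw [hZu2, hZu3]
    linear_combination (g : ℤ) * key
  have key2' : (C.r₂₃ : ℤ) * C.n₃ - C.c₂ * C.n₂ = (g * b3) * e := by
    have key : (C.r₂₃ : ℤ) * u3 - C.c₂ * u2 = b3 * e := by
      simp only [he]; linear_combination (C.r₂₃ : ℤ) * ha3 + (C.c₂ : ℤ) * hb3
    rw [hZu2, hZu3]
    linear_combination (g : ℤ) * key
  have hdr31 : (C.r₃₁ : ℤ) = (g * a3) * μ := by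
    have hc : (C.r₃₁ : ℤ) * C.n₁ = (g * a3) * e := by
      linear_combination key2 - C.ZE3
    rw [hμ] at hc
    exact mul_right_cancel₀ hn1' (by linear_combination hc)
  have hdr21 : (C.r₂₁ : ℤ) = (-(g * b3)) * μ := by
    have hc : (C.r₂₁ : ℤ) * C.n₁ = (-(g * b3)) * e := by
      linear_combination -key2' - C.ZE2
    rw [hμ] at hc
    exact mul_right_cancel₀ hn1' (by linear_combination hc)
  -- μ divides c₁, r₁₂, r₁₃
  have hcid1 : (C.c₁ : ℤ) = C.r₂₁ + C.r₃₁ := by exact_mod_cast C.cid1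
  have hcid2 : (C.c₂ : ℤ) = C.r₁₂ + C.r₃₂ := by exact_mod_cast C.cid2
  have hcid3 : (C.c₃ : ℤ) = C.r₁₃ + C.r₂₃ := by exact_mod_cast C.cid3
  have hdvc1 : μ ∣ (C.c₁ : ℤ) := by
    rw [hcid1, hdr21, hdr31]; exact dvd_add ⟨-(g*b3), by ring⟩ ⟨g*a3, by ring⟩
  have hdv12 : μ ∣ (C.r₁₂ : ℤ) := by
    have : (C.r₁₂ : ℤ) = C.c₂ - C.r₃₂ := by omega
    rw [this, hdc2, hdr32]; exact dvd_sub ⟨b2, by ring⟩ ⟨a2, by ring⟩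
  have hdv13 : μ ∣ (C.r₁₃ : ℤ) := by
    have : (C.r₁₃ : ℤ) = C.c₃ - C.r₂₃ := by omega
    rw [this, hdc3, hdr23]; exact dvd_sub ⟨a1, by ring⟩ ⟨b1, by ring⟩
  -- μ = 1
  have hμeq : μ = 1 := by
    by_contra hcon
    have hμ2 : 2 ≤ μ := by omega
    obtain ⟨κ, hκ⟩ := hdvc1
    obtain ⟨ρ₂, hρ₂⟩ := hdv12
    obtain ⟨ρ₃, hρ₃⟩ := hdv13
    have hc1p : (0:ℤ) < C.c₁ := by exact_mod_cast C.hc₁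
    have h12p : (0:ℤ) < C.r₁₂ := by exact_mod_cast C.h12
    have h13p : (0:ℤ) < C.r₁₃ := by exact_mod_cast C.h13
    have hκp : 0 < κ := by
      have hmp : 0 < μ * κ := by rw [← hκ]; exact hc1p
      rcases mul_pos_iff.mp hmp with ⟨_, h⟩ | ⟨h, _⟩
      · exact h
      · omega
    have hρ₂p : 0 < ρ₂ := by
      have hmp : 0 < μ * ρ₂ := by rw [← hρ₂]; exact h12p
      rcases mul_pos_iff.mp hmp with ⟨_, h⟩ | ⟨h, _⟩
      · exact h
      · omega
    have hρ₃p : 0 < ρ₃ := by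
      have hmp : 0 < μ * ρ₃ := by rw [← hρ₃]; exact h13p
      rcases mul_pos_iff.mp hmp with ⟨_, h⟩ | ⟨h, _⟩
      · exact h
      · omega
    have hredZ : κ * C.n₁ = ρ₂ * C.n₂ + ρ₃ * C.n₃ := by
      have hμ0 : μ ≠ 0 := by omega
      apply mul_left_cancel₀ hμ0
      have := C.ZE1
      rw [hκ, hρ₂, hρ₃] at this
      linear_combination this
    obtain ⟨κn, hκn⟩ := Int.eq_ofNat_of_zero_le hκp.le
    obtain ⟨ρ₂n, hρ₂n⟩ := Int.eq_ofNat_of_zero_le hρ₂p.le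
    obtain ⟨ρ₃n, hρ₃n⟩ := Int.eq_ofNat_of_zero_le hρ₃p.le
    have hredN : κn * C.n₁ = ρ₂n * C.n₂ + ρ₃n * C.n₃ := by
      have : (κn : ℤ) * C.n₁ = (ρ₂n : ℤ) * C.n₂ + (ρ₃n : ℤ) * C.n₃ := by
        rw [← hκn, ← hρ₂n, ← hρ₃n]; exact hredZ
      exact_mod_cast this
    have hκnp : 0 < κn := by
      have : (0:ℤ) < κn := by rw [← hκn]; exact hκp
      exact_mod_cast this
    have := C.M1 κn hκnp ⟨ρ₂n, ρ₃n, hredN⟩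
    -- c₁ ≤ κn but c₁ = μ κ ≥ 2 κn > κn
    have hlast : (C.c₁ : ℤ) ≤ κn := by exact_mod_cast this
    rw [← hκn] at hlast
    have h2κ : 2 * κ ≤ μ * κ := mul_le_mul_of_nonneg_right hμ2 hκp.le
    linarith
  rw [hμeq, mul_one] at hμ
  rw [hμ] at he2 he3
  constructor
  · exact mul_right_cancel₀ hn1' (by linear_combination he2)
  · exact mul_right_cancel₀ hn1' (by linear_combination he3)


/-- No integer lattice point with positive value sits in the relevant boxes. -/
lemma noLatticeZ (X Y M : ℤ) (hM : 0 < M) (hXc : X < C.c₂) (hYc : Y < C.c₃)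
    (hbox : X < C.r₁₂ ∨ Y < C.r₁₃) (heq : X * C.n₂ + Y * C.n₃ = M * C.n₁) : False := by
  have hn1 : (0:ℤ) < C.n₁ := by exact_mod_cast C.hn₁
  have hn2 : (0:ℤ) < C.n₂ := by exact_mod_cast C.hn₂
  have hn3 : (0:ℤ) < C.n₃ := by exact_mod_cast C.hn₃
  obtain ⟨mn, hmn⟩ := Int.eq_ofNat_of_zero_le hM.le
  rcases lt_or_ge Y 0 with hY | hY
  · have h3 : 0 < X * C.n₂ := by
      have h1 : 0 < M * C.n₁ := mul_pos hM hn1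
      have h2 : 0 < (-Y) * C.n₃ := mul_pos (by omega) hn3
      nlinarith [heq]
    have hXpos : 0 < X := by
      rcases mul_pos_iff.mp h3 with ⟨h, _⟩ | ⟨_, h⟩
      · exact h
      · linarith
    obtain ⟨xn, hxn⟩ := Int.eq_ofNat_of_zero_le hXpos.le
    obtain ⟨yn, hyn⟩ := Int.eq_ofNat_of_zero_le (show (0:ℤ) ≤ -Y by omega)
    have heqN : xn * C.n₂ = mn * C.n₁ + yn * C.n₃ := by
      have : (xn:ℤ) * C.n₂ = (mn:ℤ) * C.n₁ + (yn:ℤ) * C.n₃ := by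
        rw [← hxn, ← hmn, ← hyn]; linear_combination heq
      exact_mod_cast this
    have hxnp : 0 < xn := by
      have : (0:ℤ) < (xn:ℤ) := by rw [← hxn]; exact hXpos
      exact_mod_cast this
    have hle := C.M2 xn hxnp ⟨mn, yn, heqN⟩
    have : (C.c₂ : ℤ) ≤ X := by
      rw [hxn]; exact_mod_cast hle
    omega
  rcases lt_or_ge X 0 with hX | hX
  · have h3 : 0 < Y * C.n₃ := by
      have h1 : 0 < M * C.n₁ := mul_pos hM hn1
      have h2 : 0 < (-X) * C.n₂ := mul_pos (by omega) hn2
      nlinarith [heq]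
    have hYpos : 0 < Y := by
      rcases mul_pos_iff.mp h3 with ⟨h, _⟩ | ⟨_, h⟩
      · exact h
      · linarith
    obtain ⟨yn, hyn⟩ := Int.eq_ofNat_of_zero_le hYpos.le
    obtain ⟨xn, hxn⟩ := Int.eq_ofNat_of_zero_le (show (0:ℤ) ≤ -X by omega)
    have heqN : yn * C.n₃ = mn * C.n₁ + xn * C.n₂ := by
      have : (yn:ℤ) * C.n₃ = (mn:ℤ) * C.n₁ + (xn:ℤ) * C.n₂ := by
        rw [← hyn, ← hmn, ← hxn]; linear_combination heq
      exact_mod_cast this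
    have hynp : 0 < yn := by
      have : (0:ℤ) < (yn:ℤ) := by rw [← hyn]; exact hYpos
      exact_mod_cast this
    have hle := C.M3 yn hynp ⟨mn, xn, heqN⟩
    have : (C.c₃ : ℤ) ≤ Y := by
      rw [hyn]; exact_mod_cast hle
    omega
  · obtain ⟨xn, hxn⟩ := Int.eq_ofNat_of_zero_le hX
    obtain ⟨yn, hyn⟩ := Int.eq_ofNat_of_zero_le hY
    have heqN : xn * C.n₂ + yn * C.n₃ = mn * C.n₁ := by
      have : (xn:ℤ) * C.n₂ + (yn:ℤ) * C.n₃ = (mn:ℤ) * C.n₁ := by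
        rw [← hxn, ← hyn, ← hmn]; linear_combination heq
      exact_mod_cast this
    have hmnp : 0 < mn := by
      have : (0:ℤ) < (mn:ℤ) := by rw [← hmn]; exact hM
      exact_mod_cast this
    rcases hbox with hb | hb
    · refine C.noSmall_a mn xn yn hmnp ?_ ?_ heqN
      · have : (xn : ℤ) < C.r₁₂ := by rw [← hxn]; exact hb
        exact_mod_cast this
      · have : (yn : ℤ) < C.c₃ := by rw [← hyn]; exact hYc
        exact_mod_cast this
    · refine C.noSmall_b mn xn yn hmnp ?_ ?_ heqN
      · have : (xn : ℤ) < C.c₂ := by rw [← hxn]; exact hXc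
        exact_mod_cast this
      · have : (yn : ℤ) < C.r₁₃ := by rw [← hyn]; exact hb
        exact_mod_cast this


/-- `A ≠ B` for the two candidate pseudo-Frobenius numbers. -/
lemma AneB :
    ((C.c₂ : ℤ) - 1) * C.n₂ + ((C.r₁₃ : ℤ) - 1) * C.n₃ - C.n₁
      ≠ ((C.c₃ : ℤ) - 1) * C.n₃ + ((C.r₁₂ : ℤ) - 1) * C.n₂ - C.n₁ := by
  intro h
  have hcid2 : (C.c₂ : ℤ) = C.r₁₂ + C.r₃₂ := by exact_mod_cast C.cid2
  have hcid3 : (C.c₃ : ℤ) = C.r₁₃ + C.r₂₃ := by exact_mod_cast C.cid3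
  have hz : (C.r₃₂ : ℤ) * C.n₂ = C.r₂₃ * C.n₃ := by
    linear_combination h - (C.n₂ : ℤ) * hcid2 + (C.n₃ : ℤ) * hcid3
  have key : C.r₁₃ * C.n₃ = C.r₃₁ * C.n₁ + 0 * C.n₂ := by
    have : (C.r₁₃ : ℤ) * C.n₃ = C.r₃₁ * C.n₁ + 0 * C.n₂ := by
      linear_combination C.ZE3 + hz - (C.n₃ : ℤ) * hcid3
    exact_mod_cast this
  have hle := C.M3 C.r₁₃ C.h13 ⟨C.r₃₁, 0, key⟩
  have := C.lt13
  omega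

/-- The difference of the two candidate pseudo-Frobenius numbers. -/
lemma diffAB (hgcd : Nat.gcd C.n₁ (Nat.gcd C.n₂ C.n₃) = 1) :
    (((C.c₂ : ℤ) - 1) * C.n₂ + ((C.r₁₃ : ℤ) - 1) * C.n₃ - C.n₁)
      - (((C.c₃ : ℤ) - 1) * C.n₃ + ((C.r₁₂ : ℤ) - 1) * C.n₂ - C.n₁)
      = (C.r₁₃ : ℤ) * C.r₂₁ * C.r₃₂ - (C.r₁₂ : ℤ) * C.r₂₃ * C.r₃₁ := by
  obtain ⟨n2id, n3id⟩ := C.nident hgcd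
  have hcid2 : (C.c₂ : ℤ) = C.r₁₂ + C.r₃₂ := by exact_mod_cast C.cid2
  have hcid3 : (C.c₃ : ℤ) = C.r₁₃ + C.r₂₃ := by exact_mod_cast C.cid3
  have s1 : (((C.c₂ : ℤ) - 1) * C.n₂ + ((C.r₁₃ : ℤ) - 1) * C.n₃ - C.n₁)
      - (((C.c₃ : ℤ) - 1) * C.n₃ + ((C.r₁₂ : ℤ) - 1) * C.n₂ - C.n₁)
      = (C.r₃₂ : ℤ) * C.n₂ - C.r₂₃ * C.n₃ := by
    linear_combination (C.n₂ : ℤ) * hcid2 - (C.n₃ : ℤ) * hcid3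
  rw [s1]
  linear_combination (C.r₃₂ : ℤ) * n2id - (C.r₂₃ : ℤ) * n3id
    + ((C.r₂₁ : ℤ) * C.r₃₂) * hcid3 - ((C.r₂₃ : ℤ) * C.r₃₁) * hcid2

/-- The first candidate is a pseudo-Frobenius number. -/
lemma A_pf (S : AddSubmonoid ℕ) (hS : S = AddSubmonoid.closure {C.n₁, C.n₂, C.n₃}) :
    (((C.c₂ : ℤ) - 1) * C.n₂ + ((C.r₁₃ : ℤ) - 1) * C.n₃ - C.n₁) ∈ pseudoFrobeniusSet S := by
  have h1c₁ : 1 ≤ C.c₁ := C.hc₁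
  have h1c₂ : 1 ≤ C.c₂ := by have := C.lt12; omega
  have h1c₃ : 1 ≤ C.c₃ := by have := C.lt13; omega
  have hcid2 : (C.c₂ : ℤ) = C.r₁₂ + C.r₃₂ := by exact_mod_cast C.cid2
  have hcid3 : (C.c₃ : ℤ) = C.r₁₃ + C.r₂₃ := by exact_mod_cast C.cid3
  constructor
  · rintro ⟨nn, hnn, hcast⟩
    rw [hS] at hnn
    obtain ⟨p, q, r, rfl⟩ := ns11_triple.mp hnn
    push_cast at hcast
    have hlt13 := C.lt13
    refine C.noLatticeZ ((C.c₂ : ℤ) - 1 - q) ((C.r₁₃ : ℤ) - 1 - r) ((p : ℤ) + 1)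
      (by omega) (by omega) (by omega : ((C.r₁₃:ℤ) - 1 - r) < C.c₃) (Or.inr (by omega)) ?_
    linear_combination -hcast
  · intro s hs hs0
    rw [hS] at hs
    obtain ⟨p, q, r, rfl⟩ := ns11_triple.mp hs
    rcases Nat.eq_zero_or_pos p with rfl | hp
    · rcases Nat.eq_zero_or_pos q with rfl | hq
      · rcases Nat.eq_zero_or_pos r with rfl | hr
        · exact absurd (by simp) hs0
        · refine ⟨(C.c₁ - 1) * C.n₁ + (C.r₃₂ - 1) * C.n₂ + (r - 1) * C.n₃,
            by rw [hS]; exact ns11_triple.mpr ⟨_, _, _, rfl⟩, ?_⟩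
          push_cast [Nat.cast_sub h1c₁, Nat.cast_sub C.h32, Nat.cast_sub hr]
          linear_combination C.ZE1 - (C.n₂ : ℤ) * hcid2
      · refine ⟨(C.r₂₁ - 1) * C.n₁ + (q - 1) * C.n₂ + ((C.c₃ - 1) + r) * C.n₃,
          by rw [hS]; exact ns11_triple.mpr ⟨_, _, _, rfl⟩, ?_⟩
        push_cast [Nat.cast_sub C.h21, Nat.cast_sub hq, Nat.cast_sub h1c₃]
        linear_combination -C.ZE2 + (C.n₃ : ℤ) * hcid3
    · refine ⟨(p - 1) * C.n₁ + ((C.c₂ - 1) + q) * C.n₂ + ((C.r₁₃ - 1) + r) * C.n₃,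
        by rw [hS]; exact ns11_triple.mpr ⟨_, _, _, rfl⟩, ?_⟩
      push_cast [Nat.cast_sub hp, Nat.cast_sub h1c₂, Nat.cast_sub C.h13]
      ring

/-- The second candidate is a pseudo-Frobenius number. -/
lemma B_pf (S : AddSubmonoid ℕ) (hS : S = AddSubmonoid.closure {C.n₁, C.n₂, C.n₃}) :
    (((C.c₃ : ℤ) - 1) * C.n₃ + ((C.r₁₂ : ℤ) - 1) * C.n₂ - C.n₁) ∈ pseudoFrobeniusSet S := by
  have h1c₁ : 1 ≤ C.c₁ := C.hc₁
  have h1c₂ : 1 ≤ C.c₂ := by have := C.lt12; omega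
  have h1c₃ : 1 ≤ C.c₃ := by have := C.lt13; omega
  have hcid2 : (C.c₂ : ℤ) = C.r₁₂ + C.r₃₂ := by exact_mod_cast C.cid2
  have hcid3 : (C.c₃ : ℤ) = C.r₁₃ + C.r₂₃ := by exact_mod_cast C.cid3
  constructor
  · rintro ⟨nn, hnn, hcast⟩
    rw [hS] at hnn
    obtain ⟨p, q, r, rfl⟩ := ns11_triple.mp hnn
    push_cast at hcast
    have hlt12 := C.lt12
    refine C.noLatticeZ ((C.r₁₂ : ℤ) - 1 - q) ((C.c₃ : ℤ) - 1 - r) ((p : ℤ) + 1)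
      (by omega) (by omega) (by omega) (Or.inl (by omega)) ?_
    linear_combination -hcast
  · intro s hs hs0
    rw [hS] at hs
    obtain ⟨p, q, r, rfl⟩ := ns11_triple.mp hs
    rcases Nat.eq_zero_or_pos p with rfl | hp
    · rcases Nat.eq_zero_or_pos q with rfl | hq
      · rcases Nat.eq_zero_or_pos r with rfl | hr
        · exact absurd (by simp) hs0
        · refine ⟨(C.r₃₁ - 1) * C.n₁ + (C.c₂ - 1) * C.n₂ + (r - 1) * C.n₃,
            by rw [hS]; exact ns11_triple.mpr ⟨_, _, _, rfl⟩, ?_⟩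
          push_cast [Nat.cast_sub C.h31, Nat.cast_sub h1c₂, Nat.cast_sub hr]
          linear_combination -C.ZE3 + (C.n₂ : ℤ) * hcid2
      · refine ⟨(C.c₁ - 1) * C.n₁ + (q - 1) * C.n₂ + ((C.r₂₃ - 1) + r) * C.n₃,
          by rw [hS]; exact ns11_triple.mpr ⟨_, _, _, rfl⟩, ?_⟩
        push_cast [Nat.cast_sub h1c₁, Nat.cast_sub hq, Nat.cast_sub C.h23]
        linear_combination C.ZE1 - (C.n₃ : ℤ) * hcid3
    · refine ⟨(p - 1) * C.n₁ + ((C.r₁₂ - 1) + q) * C.n₂ + ((C.c₃ - 1) + r) * C.n₃,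
        by rw [hS]; exact ns11_triple.mpr ⟨_, _, _, rfl⟩, ?_⟩
      push_cast [Nat.cast_sub hp, Nat.cast_sub C.h12, Nat.cast_sub h1c₃]
      ring

end NS

/-- with `T(S) = {g₁, g₂}`, `g₁ = g(S)`:
(i) if `g₁ = (c₂−1)n₂ + (r₁₃−1)n₃ − n₁` then `g₁ − g₂ = r₁₃r₂₁r₃₂ − r₁₂r₂₃r₃₁`;
(ii) if `g₁ = (c₃−1)n₃ + (r₁₂−1)n₂ − n₁` then `g₁ − g₂ = r₁₂r₂₃r₃₁ − r₁₃r₂₁r₃₂`. -/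
theorem stmt11
    (n₁ n₂ n₃ : ℕ)
    (h1 : 0 < n₁) (h12 : n₁ < n₂) (h23 : n₂ < n₃)
    (hgcd : Nat.gcd n₁ (Nat.gcd n₂ n₃) = 1)
    (hmin1 : n₁ ∉ AddSubmonoid.closure {n₂, n₃})
    (hmin2 : n₂ ∉ AddSubmonoid.closure {n₁, n₃})
    (hmin3 : n₃ ∉ AddSubmonoid.closure {n₁, n₂})
    (S : AddSubmonoid ℕ) (hS : S = AddSubmonoid.closure {n₁, n₂, n₃})
    (hnotsym : ¬ ∀ x : ℤ, ¬ S.zmem x ↔ S.zmem (frobeniusNumber S - x))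
    (c₁ c₂ c₃ : ℕ)
    (hc₁ : 0 < c₁ ∧ c₁ * n₁ ∈ AddSubmonoid.closure {n₂, n₃} ∧
      ∀ c : ℕ, 0 < c → c * n₁ ∈ AddSubmonoid.closure {n₂, n₃} → c₁ ≤ c)
    (hc₂ : 0 < c₂ ∧ c₂ * n₂ ∈ AddSubmonoid.closure {n₁, n₃} ∧
      ∀ c : ℕ, 0 < c → c * n₂ ∈ AddSubmonoid.closure {n₁, n₃} → c₂ ≤ c)
    (hc₃ : 0 < c₃ ∧ c₃ * n₃ ∈ AddSubmonoid.closure {n₁, n₂} ∧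
      ∀ c : ℕ, 0 < c → c * n₃ ∈ AddSubmonoid.closure {n₁, n₂} → c₃ ≤ c)
    (r₁₂ r₁₃ r₂₁ r₂₃ r₃₁ r₃₂ : ℕ)
    (hr₁ : 0 < r₁₂ ∧ 0 < r₁₃ ∧ c₁ * n₁ = r₁₂ * n₂ + r₁₃ * n₃)
    (hr₂ : 0 < r₂₁ ∧ 0 < r₂₃ ∧ c₂ * n₂ = r₂₁ * n₁ + r₂₃ * n₃)
    (hr₃ : 0 < r₃₁ ∧ 0 < r₃₂ ∧ c₃ * n₃ = r₃₁ * n₁ + r₃₂ * n₂)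
    (g₁ g₂ : ℤ) (hT : pseudoFrobeniusSet S = {g₁, g₂})
    (hg₁ : g₁ = frobeniusNumber S) :
    (g₁ = ((c₂ : ℤ) - 1) * n₂ + ((r₁₃ : ℤ) - 1) * n₃ - n₁ →
      g₁ - g₂ = (r₁₃ : ℤ) * r₂₁ * r₃₂ - (r₁₂ : ℤ) * r₂₃ * r₃₁) ∧
    (g₁ = ((c₃ : ℤ) - 1) * n₃ + ((r₁₂ : ℤ) - 1) * n₂ - n₁ →
      g₁ - g₂ = (r₁₂ : ℤ) * r₂₃ * r₃₁ - (r₁₃ : ℤ) * r₂₁ * r₃₂) := by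
  have hn₂ : 0 < n₂ := by omega
  have hn₃ : 0 < n₃ := by omega
  let C : NS :=
    { n₁ := n₁, n₂ := n₂, n₃ := n₃, c₁ := c₁, c₂ := c₂, c₃ := c₃,
      r₁₂ := r₁₂, r₁₃ := r₁₃, r₂₁ := r₂₁, r₂₃ := r₂₃, r₃₁ := r₃₁, r₃₂ := r₃₂,
      hn₁ := h1, hn₂ := hn₂, hn₃ := hn₃,
      h12 := hr₁.1, h13 := hr₁.2.1, h21 := hr₂.1, h23 := hr₂.2.1,
      h31 := hr₃.1, h32 := hr₃.2.1,
      E1 := hr₁.2.2, E2 := hr₂.2.2, E3 := hr₃.2.2,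
      M1 := fun m hm hex => hc₁.2.2 m hm (ns11_pair.mpr hex),
      M2 := fun m hm hex => hc₂.2.2 m hm (ns11_pair.mpr hex),
      M3 := fun m hm hex => hc₃.2.2 m hm (ns11_pair.mpr hex) }
  have hApf : (((c₂ : ℤ) - 1) * n₂ + ((r₁₃ : ℤ) - 1) * n₃ - n₁) ∈ pseudoFrobeniusSet S :=
    C.A_pf S hS
  have hBpf : (((c₃ : ℤ) - 1) * n₃ + ((r₁₂ : ℤ) - 1) * n₂ - n₁) ∈ pseudoFrobeniusSet S :=
    C.B_pf S hS
  have hAB : (((c₂ : ℤ) - 1) * n₂ + ((r₁₃ : ℤ) - 1) * n₃ - n₁)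
      ≠ (((c₃ : ℤ) - 1) * n₃ + ((r₁₂ : ℤ) - 1) * n₂ - n₁) := C.AneB
  have hdiff : (((c₂ : ℤ) - 1) * n₂ + ((r₁₃ : ℤ) - 1) * n₃ - n₁)
      - (((c₃ : ℤ) - 1) * n₃ + ((r₁₂ : ℤ) - 1) * n₂ - n₁)
      = (r₁₃ : ℤ) * r₂₁ * r₃₂ - (r₁₂ : ℤ) * r₂₃ * r₃₁ := C.diffAB hgcd
  rw [hT] at hApf hBpf
  simp only [Set.mem_insert_iff, Set.mem_singleton_iff] at hApf hBpf
  constructor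
  · intro hg
    rcases hBpf with hB1 | hB2
    · exact absurd (hB1.trans hg) (Ne.symm hAB)
    · rw [hg, ← hB2]
      exact hdiff
  · intro hg
    rcases hApf with hA1 | hA2
    · exact absurd (hA1.trans hg) hAB
    · rw [hg, ← hA2]
      linear_combination -hdiff
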